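/- Fix a > 0 and x₁ > 0, and write w₁ = a/2 − (1/a)·log(x₁/x₂) and w₂ = a/2 − (1/a)·log(x₂/x₁). For every x₂ > 0, the function t ↦ exp(−V_a(x₁, t))·Φ(a/2 − (1/a)·log(x₁/t))/x₁², which equals the partial derivative in the first argument of exp(−V_a), has derivative at t = x₂ equal to exp(−V_a(x₁,x₂))·[ Φ(w₁)·Φ(w₂)/(x₁²·x₂²) + φ(w₁)/(a·x₁²·x₂) ]. This is the closed-form bivariate density of the Brown–Resnick process. -/

import Mathlib

open Real MeasureTheory Filter Topology

/-- The standard normal density φ(t) = (2π)^{-1/2} e^{-t²/2}. -/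
noncomputable def stdNormalPDF (t : ℝ) : ℝ :=
  (Real.sqrt (2 * Real.pi))⁻¹ * Real.exp (-t ^ 2 / 2)

/-- The standard normal cumulative distribution function Φ. -/
noncomputable def stdNormalCDF (t : ℝ) : ℝ :=
  ∫ u in Set.Iic t, stdNormalPDF u

/-- The bivariate Brown–Resnick exponent measure V_a(x₁, x₂). -/
noncomputable def brV (a x₁ x₂ : ℝ) : ℝ :=
  (1 / x₁) * stdNormalCDF (a / 2 - (1 / a) * Real.log (x₁ / x₂)) +
    (1 / x₂) * stdNormalCDF (a / 2 - (1 / a) * Real.log (x₂ / x₁))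

lemma integrable_stdNormalPDF : Integrable stdNormalPDF := by
  have h : Integrable (fun x : ℝ => Real.exp (-(1/2 : ℝ) * x ^ 2)) :=
    integrable_exp_neg_mul_sq (by norm_num)
  have := h.const_mul (Real.sqrt (2 * Real.pi))⁻¹
  refine this.congr ?_
  filter_upwards with x
  simp only [stdNormalPDF]
  congr 1
  ring

lemma continuous_stdNormalPDF : Continuous stdNormalPDF := by
  unfold stdNormalPDF
  fun_prop

lemma hasDerivAt_stdNormalCDF (t : ℝ) : HasDerivAt stdNormalCDF (stdNormalPDF t) t := by
  have key : ∀ s : ℝ, stdNormalCDF s = stdNormalCDF 0 + ∫ u in (0:ℝ)..s, stdNormalPDF u := by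
    intro s
    have := intervalIntegral.integral_Iic_sub_Iic (μ := volume) (f := stdNormalPDF)
      (integrable_stdNormalPDF.integrableOn) (integrable_stdNormalPDF.integrableOn)
      (a := 0) (b := s)
    simp only [stdNormalCDF]
    linarith [this]
  have hD : HasDerivAt (fun s => ∫ u in (0:ℝ)..s, stdNormalPDF u) (stdNormalPDF t) t := by
    exact intervalIntegral.integral_hasDerivAt_right
      (integrable_stdNormalPDF.intervalIntegrable)
      continuous_stdNormalPDF.stronglyMeasurable.stronglyMeasurableAtFilter
      continuous_stdNormalPDF.continuousAt
  have := hD.const_add (stdNormalCDF 0)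
  refine this.congr_of_eventuallyEq ?_
  filter_upwards with s using key s

lemma pdf_balance (a x₁ x₂ : ℝ) (ha : 0 < a) (hx₁ : 0 < x₁) (hx₂ : 0 < x₂) :
    stdNormalPDF (a / 2 - (1 / a) * Real.log (x₁ / x₂)) * x₂
      = stdNormalPDF (a / 2 - (1 / a) * Real.log (x₂ / x₁)) * x₁ := by
  have h1 : Real.log (x₁ / x₂) = Real.log x₁ - Real.log x₂ := Real.log_div hx₁.ne' hx₂.ne'
  have h2 : Real.log (x₂ / x₁) = Real.log x₂ - Real.log x₁ := Real.log_div hx₂.ne' hx₁.ne'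
  simp only [stdNormalPDF, h1, h2]
  set L1 := Real.log x₁ with hL1
  set L2 := Real.log x₂ with hL2
  rw [show x₁ = Real.exp L1 from (Real.exp_log hx₁).symm,
      show x₂ = Real.exp L2 from (Real.exp_log hx₂).symm,
      mul_assoc, mul_assoc, ← Real.exp_add, ← Real.exp_add]
  congr 1
  rw [Real.exp_eq_exp]
  field_simp
  ring

lemma hasDerivAt_brV (a x₁ x₂ : ℝ) (ha : 0 < a) (hx₁ : 0 < x₁) (hx₂ : 0 < x₂) :
    HasDerivAt (fun t => brV a x₁ t)
      (-(stdNormalCDF (a / 2 - (1 / a) * Real.log (x₂ / x₁)) / x₂ ^ 2)) x₂ := by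
  have hev : ∀ᶠ t in 𝓝 x₂, (0:ℝ) < t := eventually_gt_nhds hx₂
  -- inner derivative lemmas
  have hlog : HasDerivAt Real.log (1 / x₂) x₂ := by
    simpa [one_div] using Real.hasDerivAt_log hx₂.ne'
  have hw₁ : HasDerivAt (fun t => a / 2 - (1 / a) * Real.log (x₁ / t)) (1 / (a * x₂)) x₂ := by
    have base : HasDerivAt (fun t => a / 2 - (1 / a) * (Real.log x₁ - Real.log t))
        (1 / (a * x₂)) x₂ := by
      have h1 := ((hlog.const_sub (Real.log x₁)).const_mul (1 / a)).const_sub (a / 2)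
      refine h1.congr_deriv ?_
      ring
    refine base.congr_of_eventuallyEq ?_
    filter_upwards [hev] with t ht
    rw [Real.log_div hx₁.ne' ht.ne']
  have hw₂ : HasDerivAt (fun t => a / 2 - (1 / a) * Real.log (t / x₁)) (-(1 / (a * x₂))) x₂ := by
    have base : HasDerivAt (fun t => a / 2 - (1 / a) * (Real.log t - Real.log x₁))
        (-(1 / (a * x₂))) x₂ := by
      have h1 := (((hlog.sub_const (Real.log x₁))).const_mul (1 / a)).const_sub (a / 2)
      refine h1.congr_deriv ?_
      ring
    refine base.congr_of_eventuallyEq ?_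
    filter_upwards [hev] with t ht
    rw [Real.log_div ht.ne' hx₁.ne']
  have hΦ₁ : HasDerivAt (fun t => stdNormalCDF (a / 2 - (1 / a) * Real.log (x₁ / t)))
      (stdNormalPDF (a / 2 - (1 / a) * Real.log (x₁ / x₂)) * (1 / (a * x₂))) x₂ :=
    (hasDerivAt_stdNormalCDF _).comp x₂ hw₁
  have hΦ₂ : HasDerivAt (fun t => stdNormalCDF (a / 2 - (1 / a) * Real.log (t / x₁)))
      (stdNormalPDF (a / 2 - (1 / a) * Real.log (x₂ / x₁)) * (-(1 / (a * x₂)))) x₂ :=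
    (hasDerivAt_stdNormalCDF _).comp x₂ hw₂
  have hinv : HasDerivAt (fun t : ℝ => 1 / t) (-(1 / x₂ ^ 2)) x₂ := by
    simpa [one_div] using (hasDerivAt_inv hx₂.ne')
  have hsum := (hΦ₁.const_mul (1 / x₁)).add (hinv.mul hΦ₂)
  have heq : (fun t => brV a x₁ t)
      = fun t => (1 / x₁) * stdNormalCDF (a / 2 - (1 / a) * Real.log (x₁ / t))
          + (1 / t) * stdNormalCDF (a / 2 - (1 / a) * Real.log (t / x₁)) := rfl
  rw [heq]
  refine hsum.congr_deriv ?_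
  have hbal := pdf_balance a x₁ x₂ ha hx₁ hx₂
  set P1 := stdNormalPDF (a / 2 - (1 / a) * Real.log (x₁ / x₂)) with hP1
  set P2 := stdNormalPDF (a / 2 - (1 / a) * Real.log (x₂ / x₁)) with hP2
  set C2 := stdNormalCDF (a / 2 - (1 / a) * Real.log (x₂ / x₁)) with hC2
  have hx1 := hx₁.ne'
  have hx2 := hx₂.ne'
  have ha' := ha.ne'
  rw [show P1 = P2 * x₁ / x₂ by rw [eq_div_iff hx₂.ne']; exact hbal]
  field_simp
  ring


theorem stmt10 (a x₁ : ℝ) (ha : 0 < a) (hx₁ : 0 < x₁) :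
    ∀ x₂ : ℝ, 0 < x₂ →
      HasDerivAt
        (fun t => Real.exp (-brV a x₁ t) *
          stdNormalCDF (a / 2 - (1 / a) * Real.log (x₁ / t)) / x₁ ^ 2)
        (Real.exp (-brV a x₁ x₂) *
          (stdNormalCDF (a / 2 - (1 / a) * Real.log (x₁ / x₂)) *
              stdNormalCDF (a / 2 - (1 / a) * Real.log (x₂ / x₁)) / (x₁ ^ 2 * x₂ ^ 2) +
            stdNormalPDF (a / 2 - (1 / a) * Real.log (x₁ / x₂)) / (a * x₁ ^ 2 * x₂)))
        x₂ := by
  intro x₂ hx₂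
  have hV := hasDerivAt_brV a x₁ x₂ ha hx₁ hx₂
  have hexp : HasDerivAt (fun t => Real.exp (-brV a x₁ t))
      (Real.exp (-brV a x₁ x₂) * (stdNormalCDF (a / 2 - (1 / a) * Real.log (x₂ / x₁)) / x₂ ^ 2))
      x₂ := by
    have := (hV.neg).exp
    convert this using 1
    · rfl
    · simp
  have hlog : HasDerivAt Real.log (1 / x₂) x₂ := by
    simpa [one_div] using Real.hasDerivAt_log hx₂.ne'
  have hw₁ : HasDerivAt (fun t => a / 2 - (1 / a) * Real.log (x₁ / t)) (1 / (a * x₂)) x₂ := by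
    have base : HasDerivAt (fun t => a / 2 - (1 / a) * (Real.log x₁ - Real.log t))
        (1 / (a * x₂)) x₂ := by
      have h1 := ((hlog.const_sub (Real.log x₁)).const_mul (1 / a)).const_sub (a / 2)
      refine h1.congr_deriv ?_
      ring
    refine base.congr_of_eventuallyEq ?_
    filter_upwards [eventually_gt_nhds hx₂] with t ht
    rw [Real.log_div hx₁.ne' ht.ne']
  have hΦ₁ : HasDerivAt (fun t => stdNormalCDF (a / 2 - (1 / a) * Real.log (x₁ / t)))
      (stdNormalPDF (a / 2 - (1 / a) * Real.log (x₁ / x₂)) * (1 / (a * x₂))) x₂ :=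
    (hasDerivAt_stdNormalCDF _).comp x₂ hw₁
  have hprod := (hexp.mul hΦ₁).div_const (x₁ ^ 2)
  refine hprod.congr_deriv ?_
  ring
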